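/- For all real $x \ge 11$, $\tau(x) := \left(\frac{2x+1}{2x+2}\right)^{4\sqrt{x}} \cdot \frac{2x+2}{4\sqrt{x}-1} \ge 1.112 > 1$. -/
import Mathlib

theorem stmt_13 (x : ℝ) (hx : 11 ≤ x) :
    ((2 * x + 1) / (2 * x + 2)) ^ (4 * Real.sqrt x) * ((2 * x + 2) / (4 * Real.sqrt x - 1))
      ≥ 1.112 ∧ (1.112 : ℝ) > 1 := by
  refine ⟨?_, by norm_num⟩
  set s := Real.sqrt x with hs
  have hs0 : 0 ≤ s := Real.sqrt_nonneg x
  have hsx : s ^ 2 = x := Real.sq_sqrt (by linarith)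
  have hsa : (3.3166 : ℝ) ≤ s := by nlinarith
  have h2x : (0 : ℝ) < 2 * x + 2 := by linarith
  have hB0 : (0 : ℝ) ≤ (2 * x + 1) / (2 * x + 2) := by positivity
  have hp : (1 : ℝ) ≤ 4 * s / 13 := by linarith
  have hu : (-1 : ℝ) ≤ -(1 / (2 * x + 2)) := by
    have : 1 / (2 * x + 2) ≤ 1 := by
      rw [div_le_one h2x]; linarith
    linarith
  have key := one_add_mul_self_le_rpow_one_add hu hp
  have hbase : (1 : ℝ) + -(1 / (2 * x + 2)) = (2 * x + 1) / (2 * x + 2) := by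
    field_simp
    ring
  rw [hbase] at key
  -- key : 1 + 4*s/13 * -(1/(2*x+2)) ≤ ((2*x+1)/(2*x+2)) ^ (4*s/13)
  have hc : (1 : ℝ) + 4 * s / 13 * -(1 / (2 * x + 2)) = 1 - 2 * s / (13 * (s ^ 2 + 1)) := by
    rw [← hsx] at h2x ⊢
    field_simp
    ring
  rw [hc] at key
  have hb1 : (3734116557 / 3899946557 : ℝ) ≤ 1 - 2 * s / (13 * (s ^ 2 + 1)) := by
    have h1 : (0 : ℝ) < 13 * (s ^ 2 + 1) := by positivity
    rw [le_sub_iff_add_le, ← sub_nonneg]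
    have h2 : (0 : ℝ) ≤ (s - 3.3166) * (s * 3.3166 - 1) := by nlinarith
    have h3 : 2 * s / (13 * (s ^ 2 + 1)) ≤ 165830000 / 3899946557 := by
      rw [div_le_div_iff₀ h1 (by norm_num)]
      nlinarith
    nlinarith [h3]
  have hb10 : (0 : ℝ) ≤ (3734116557 / 3899946557 : ℝ) := by norm_num
  have hpow13 : ((3734116557 / 3899946557 : ℝ)) ^ (13 : ℕ)
      ≤ (((2 * x + 1) / (2 * x + 2)) ^ (4 * s / 13)) ^ (13 : ℕ) :=
    pow_le_pow_left₀ hb10 (le_trans hb1 key) 13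
  have hrw : (((2 * x + 1) / (2 * x + 2)) ^ (4 * s / 13)) ^ (13 : ℕ)
      = ((2 * x + 1) / (2 * x + 2)) ^ (4 * s) := by
    rw [← Real.rpow_natCast (((2 * x + 1) / (2 * x + 2)) ^ (4 * s / 13)) 13,
      ← Real.rpow_mul hB0]
    norm_num
  rw [hrw] at hpow13
  have hf1 : (299995889 / 153330000 : ℝ) ≤ (2 * x + 2) / (4 * s - 1) := by
    rw [div_le_div_iff₀ (by norm_num) (by linarith)]
    rw [← hsx]
    nlinarith [mul_nonneg (sub_nonneg.2 hsa) (show (0 : ℝ) ≤ s - 0.6 by linarith)]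
  have htotal : (3734116557 / 3899946557 : ℝ) ^ (13 : ℕ) * (299995889 / 153330000 : ℝ)
      ≤ ((2 * x + 1) / (2 * x + 2)) ^ (4 * s) * ((2 * x + 2) / (4 * s - 1)) := by
    apply mul_le_mul hpow13 hf1 (by norm_num)
    positivity
  refine le_trans ?_ htotal
  norm_num
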